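/- Conversely, if Λ̃ ∈ R* has Hankel operator of rank r with B (a monomial set connected to 1, |B| = r) a basis of A_{Λ̃}, then the multiplication matrices M_i = (H^B_{Λ̃})^{-1} H^B_{x_i⋆Λ̃} pairwise commute and H^B_{Λ̃} is invertible. -/

import Mathlib

open MvPolynomial

/-- The Hankel operator `H_Λ : p ↦ (q ↦ Λ(pq))`. -/
noncomputable def hankelOp (K : Type*) [Field K] (n : ℕ)
    (Λ : Module.Dual K (MvPolynomial (Fin n) K)) :
    MvPolynomial (Fin n) K →ₗ[K] Module.Dual K (MvPolynomial (Fin n) K) :=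
  (LinearMap.mul K (MvPolynomial (Fin n) K)).compr₂ Λ

/-- The kernel ideal `I_Λ = {p : ∀ q, Λ(pq) = 0}`. -/
def hankelIdeal (K : Type*) [Field K] (n : ℕ)
    (Λ : Module.Dual K (MvPolynomial (Fin n) K)) : Ideal (MvPolynomial (Fin n) K) where
  carrier := {p | ∀ q, Λ (p * q) = 0}
  add_mem' := by
    intro a b ha hb q
    rw [Set.mem_setOf_eq] at ha hb
    rw [add_mul, map_add, ha q, hb q, add_zero]
  zero_mem' := by
    intro q
    rw [zero_mul, map_zero]
  smul_mem' := by
    intro c p hp q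
    rw [Set.mem_setOf_eq] at hp
    have h : (c • p) * q = p * (c * q) := by rw [smul_eq_mul]; ring
    rw [h]
    exact hp _

/-- The evaluation functional `1_ζ : p ↦ p(ζ)`. -/
noncomputable def evalDual (K : Type*) [Field K] (n : ℕ) (ζ : Fin n → K) :
    Module.Dual K (MvPolynomial (Fin n) K) :=
  (MvPolynomial.aeval ζ).toLinearMap

/-- Conversely, if `H_Λ̃` has rank `r` with `B` (connected to 1, `|B| = r`) a basis of
`A_Λ̃`, then `H^B_Λ̃` is invertible and the multiplication matrices
`M_i = (H^B_Λ̃)⁻¹ H^B_{x_i ⋆ Λ̃}` pairwise commute. -/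
theorem commuting_multiplication_of_flat_extension (K : Type*) [Field K] (n r : ℕ)
    (b : Fin r → (Fin n →₀ ℕ))
    (hinj : Function.Injective b)
    (hconn : ∀ j, b j = 0 ∨ ∃ (i : Fin n) (j' : Fin r), b j = Finsupp.single i 1 + b j')
    (Λt : Module.Dual K (MvPolynomial (Fin n) K))
    (hfin : Module.Finite K ↥(LinearMap.range (hankelOp K n Λt)))
    (hrank : Module.finrank K ↥(LinearMap.range (hankelOp K n Λt)) = r)
    (hbasis : IsCompl
      (Submodule.span K (Set.range fun j => (monomial (b j) (1 : K) : MvPolynomial (Fin n) K)))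
      (LinearMap.ker (hankelOp K n Λt)))
    (HB : Matrix (Fin r) (Fin r) K)
    (hHB : HB = Matrix.of fun j k => Λt ((monomial (b j) 1) * monomial (b k) 1))
    (HBx : Fin n → Matrix (Fin r) (Fin r) K)
    (hHBx : ∀ i, HBx i = Matrix.of fun j k =>
      Λt (X i * ((monomial (b j) 1) * monomial (b k) 1))) :
    IsUnit HB.det ∧
    ∀ i i' : Fin n,
      (HB⁻¹ * HBx i) * (HB⁻¹ * HBx i') = (HB⁻¹ * HBx i') * (HB⁻¹ * HBx i) := by
  set m : Fin r → MvPolynomial (Fin n) K := fun j => monomial (b j) 1 with hm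
  set I := LinearMap.ker (hankelOp K n Λt) with hI
  -- membership in kernel
  have hker : ∀ p, p ∈ I ↔ ∀ q, Λt (p * q) = 0 := by
    intro p
    simp only [hI, LinearMap.mem_ker, LinearMap.ext_iff, hankelOp, LinearMap.compr₂_apply,
      LinearMap.mul_apply', LinearMap.zero_apply]
  -- linear independence of the monomials
  have hli : LinearIndependent K m := by
    have := (MvPolynomial.basisMonomials (Fin n) K).linearIndependent.comp b hinj
    rwa [MvPolynomial.coe_basisMonomials] at this
  have hli' := Fintype.linearIndependent_iff.mp hli
  -- decomposition
  have hdec : ∀ p : MvPolynomial (Fin n) K, ∃ c : Fin r → K,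
      p - ∑ j, c j • m j ∈ I := by
    intro p
    have hp : p ∈ Submodule.span K (Set.range m) ⊔ I := by
      rw [hbasis.sup_eq_top]; exact Submodule.mem_top
    obtain ⟨v, hv, w, hw, hvw⟩ := Submodule.mem_sup.mp hp
    obtain ⟨c, hc⟩ := (Submodule.mem_span_range_iff_exists_fun K).mp hv
    exact ⟨c, by rw [hc, ← hvw]; simpa using hw⟩
  -- I is closed under multiplication by X i
  have hXI : ∀ (i : Fin n) (p), p ∈ I → X i * p ∈ I := by
    intro i p hp
    rw [hker] at hp ⊢
    intro q
    rw [show X i * p * q = p * (X i * q) by ring]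
    exact hp _
  -- choose multiplication matrices
  choose c hc using fun (i : Fin n) (k : Fin r) => hdec (X i * m k)
  set N : Fin n → Matrix (Fin r) (Fin r) K := fun i => Matrix.of fun j k => c i k j with hN
  -- Λt (m j * w) = 0 for w ∈ I
  have hmw : ∀ (j : Fin r) (w), w ∈ I → Λt (m j * w) = 0 := by
    intro j w hw
    rw [mul_comm]
    exact (hker w).mp hw _
  -- invertibility of HB
  have hdet : IsUnit HB.det := by
    rw [isUnit_iff_ne_zero]
    intro h0
    obtain ⟨v, hv, hmul⟩ := Matrix.exists_mulVec_eq_zero_iff.mpr h0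
    set p : MvPolynomial (Fin n) K := ∑ k, v k • m k with hp
    have hpm : ∀ j, Λt (m j * p) = 0 := by
      intro j
      have : Λt (m j * p) = HB.mulVec v j := by
        rw [hp, Finset.mul_sum, map_sum, hHB, Matrix.mulVec]
        simp only [dotProduct, Matrix.of_apply, mul_smul_comm, map_smul,
          smul_eq_mul, mul_comm]
        rfl
      rw [this, hmul, Pi.zero_apply]
    have hpI : p ∈ I := by
      rw [hker]
      intro q
      obtain ⟨d, hd⟩ := hdec q
      have hq : q = (∑ j, d j • m j) + (q - ∑ j, d j • m j) := by ring
      rw [hq, mul_add, map_add, Finset.mul_sum, map_sum]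
      have h1 : ∀ j ∈ Finset.univ, Λt (p * d j • m j) = 0 := by
        intro j _
        rw [mul_smul_comm, map_smul, mul_comm, hpm j, smul_zero]
      rw [Finset.sum_eq_zero h1, zero_add, mul_comm]
      exact (hker _).mp hd _
    have hpV : p ∈ Submodule.span K (Set.range m) := by
      rw [hp]
      exact Submodule.sum_mem _ fun k _ => Submodule.smul_mem _ _
        (Submodule.subset_span ⟨k, rfl⟩)
    have hp0 : p = 0 := (Submodule.disjoint_def.mp hbasis.disjoint) p hpV hpI
    exact hv (funext fun k => hli' v (by rw [← hp, hp0]) k)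
  -- HBx i = HB * N i
  have hHBN : ∀ i, HBx i = HB * (N i) := by
    intro i
    ext j k
    have key : Λt (m j * (X i * m k)) = Λt (m j * ∑ l, c i k l • m l) := by
      have : Λt (m j * ((X i * m k) - ∑ l, c i k l • m l)) = 0 := hmw j _ (hc i k)
      rw [mul_sub, map_sub, sub_eq_zero] at this
      exact this
    rw [hHBx i, hHB]
    simp only [Matrix.mul_apply, Matrix.of_apply, hN]
    rw [show X i * (m j * m k) = m j * (X i * m k) by ring, key, Finset.mul_sum, map_sum]
    congr 1
    ext l
    rw [mul_smul_comm, map_smul, smul_eq_mul, mul_comm]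
  -- the N i pairwise commute
  have hNcomm : ∀ i i', N i * N i' = N i' * N i := by
    have hrep : ∀ (i i' : Fin n) (k : Fin r),
        (X i * (X i' * m k)) - ∑ p, (N i * N i') p k • m p ∈ I := by
      intro i i' k
      have e1 : X i * (X i' * m k) =
          (∑ l, c i' k l • (X i * m l)) + X i * ((X i' * m k) - ∑ l, c i' k l • m l) := by
        rw [mul_sub, Finset.mul_sum]
        simp only [mul_smul_comm]
        ring
      have e2 : ∀ l, c i' k l • (X i * m l) =
          c i' k l • (∑ p, c i l p • m p) + c i' k l • ((X i * m l) - ∑ p, c i l p • m p) := by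
        intro l
        rw [← smul_add]
        congr 1
        ring
      have hsum : (∑ l, c i' k l • (∑ p, c i l p • m p)) = ∑ p, (N i * N i') p k • m p := by
        simp_rw [Finset.smul_sum, smul_smul]
        rw [Finset.sum_comm]
        refine Finset.sum_congr rfl fun p _ => ?_
        rw [Matrix.mul_apply, Finset.sum_smul]
        refine Finset.sum_congr rfl fun l _ => ?_
        congr 1
        simp only [hN, Matrix.of_apply]
        ring
      have expand : (X i * (X i' * m k)) - ∑ p, (N i * N i') p k • m p
          = (∑ l, c i' k l • ((X i * m l) - ∑ p, c i l p • m p))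
            + X i * ((X i' * m k) - ∑ l, c i' k l • m l) := by
        rw [← hsum]
        simp only [smul_sub, Finset.sum_sub_distrib, mul_sub, smul_eq_C_mul, Finset.mul_sum]
        have hcom : ∀ x : Fin r, X i * (C (c i' k x) * m x) = C (c i' k x) * X i * m x :=
          fun x => by ring
        simp only [hcom, ← mul_assoc]
        ring
      rw [expand]
      exact Submodule.add_mem _
        (Submodule.sum_mem _ fun l _ => Submodule.smul_mem _ _ (hc i l))
        (hXI i _ (hc i' k))
    intro i i'
    ext j k
    have hdi : (∑ p, ((N i * N i') p k - (N i' * N i) p k) • m p) ∈ I := by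
      have h1 := hrep i i' k
      have h2 := hrep i' i k
      have heq : (∑ p, ((N i * N i') p k - (N i' * N i) p k) • m p)
          = ((X i' * (X i * m k)) - ∑ p, (N i' * N i) p k • m p)
            - ((X i * (X i' * m k)) - ∑ p, (N i * N i') p k • m p) := by
        simp only [sub_smul, Finset.sum_sub_distrib]
        rw [show X i' * (X i * m k) = X i * (X i' * m k) by ring]
        ring
      rw [heq]
      exact Submodule.sub_mem _ h2 h1
    have hdV : (∑ p, ((N i * N i') p k - (N i' * N i) p k) • m p)
        ∈ Submodule.span K (Set.range m) :=
      Submodule.sum_mem _ fun p _ => Submodule.smul_mem _ _ (Submodule.subset_span ⟨p, rfl⟩)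
    have h0 : (∑ p, ((N i * N i') p k - (N i' * N i) p k) • m p) = 0 :=
      (Submodule.disjoint_def.mp hbasis.disjoint) _ hdV hdi
    exact sub_eq_zero.mp (hli' _ h0 j)
  refine ⟨hdet, fun i i' => ?_⟩
  have hinv : ∀ i, HB⁻¹ * HBx i = N i := by
    intro i
    rw [hHBN i, ← mul_assoc, Matrix.nonsing_inv_mul HB hdet, one_mul]
  rw [hinv, hinv, hNcomm]
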